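/- Let K be a linearly ordered idempotent semifield and A : Matrix (Fin n) (Fin n) K. Then A is singular (tropically singular) if and only if A is a zero of the determinant, i.e., there exists a set T of permutations of Fin n such that ∑ over σ ∈ T of w(σ) equals ∑ over σ ∉ T of w(σ), where w(σ) = ∏ i, A i (σ i). -/

import Mathlib

/-- A matrix is singular if it admits an orthogonal decomposition `A = A₁ + A₂`
(entrywise disjoint supports) together with a nonzero vector `x` with `A₁ x = A₂ x`. -/
def Matrix.TropSingular {K : Type*} [Semifield K] {m n : Type*} [Fintype n]
    (A : Matrix m n K) : Prop :=
  ∃ A₁ A₂ : Matrix m n K, A = A₁ + A₂ ∧ (∀ i j, A₁ i j = 0 ∨ A₂ i j = 0) ∧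
    ∃ x : n → K, x ≠ 0 ∧ A₁.mulVec x = A₂.mulVec x

section TropAux

variable {K : Type*} [Semifield K] [LinearOrder K]

theorem trop_zero_le (hadd : ∀ a b : K, a + b = max a b) (a : K) : 0 ≤ a := by
  have h := zero_add a
  rw [hadd] at h
  rw [← h]; exact le_max_left _ _

theorem trop_le_iff (hadd : ∀ a b : K, a + b = max a b) {a b : K} : a ≤ b ↔ a + b = b := by
  rw [hadd]; exact max_eq_right_iff.symm

theorem trop_mul_le_mul_right (hadd : ∀ a b : K, a + b = max a b) {a b : K} (h : a ≤ b)
    (c : K) : a * c ≤ b * c := by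
  rw [trop_le_iff hadd, ← add_mul, trop_le_iff hadd |>.mp h]

theorem trop_mul_le_mul_left (hadd : ∀ a b : K, a + b = max a b) {a b : K} (h : a ≤ b)
    (c : K) : c * a ≤ c * b := by
  rw [mul_comm c a, mul_comm c b]; exact trop_mul_le_mul_right hadd h c

theorem trop_le_of_mul_le_mul (hadd : ∀ a b : K, a + b = max a b) {a b c : K}
    (h : a * c ≤ b * c) (hc : c ≠ 0) : a ≤ b := by
  have := trop_mul_le_mul_right hadd h c⁻¹
  rwa [mul_assoc, mul_assoc, mul_inv_cancel₀ hc, mul_one, mul_one] at this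

theorem trop_le_sum (hadd : ∀ a b : K, a + b = max a b) {ι : Type*} {s : Finset ι}
    {f : ι → K} {j : ι} (hj : j ∈ s) : f j ≤ ∑ i ∈ s, f i := by
  classical
  rw [← Finset.add_sum_erase _ f hj, hadd]
  exact le_max_left _ _

theorem trop_sum_le (hadd : ∀ a b : K, a + b = max a b) {ι : Type*} {s : Finset ι}
    {f : ι → K} {c : K} (h : ∀ j ∈ s, f j ≤ c) : ∑ i ∈ s, f i ≤ c := by
  classical
  induction s using Finset.induction_on with
  | empty => simpa using trop_zero_le hadd c
  | insert _ _ hx ih =>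
      rw [Finset.sum_insert hx, hadd]
      exact max_le (h _ (Finset.mem_insert_self _ _))
        (ih fun j hj => h j (Finset.mem_insert_of_mem hj))

theorem trop_sum_eq_zero (hadd : ∀ a b : K, a + b = max a b) {ι : Type*} {s : Finset ι}
    {f : ι → K} (h : ∑ i ∈ s, f i = 0) {j : ι} (hj : j ∈ s) : f j = 0 :=
  le_antisymm (h ▸ trop_le_sum hadd hj) (trop_zero_le hadd _)

theorem trop_sum_mem (hadd : ∀ a b : K, a + b = max a b) {ι : Type*} {s : Finset ι}
    {f : ι → K} (h : ∑ i ∈ s, f i ≠ 0) : ∃ j ∈ s, f j = ∑ i ∈ s, f i := by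
  classical
  induction s using Finset.induction_on with
  | empty => simp at h
  | @insert a s hx ih =>
      rw [Finset.sum_insert hx, hadd] at h ⊢
      rcases max_cases (f a) (∑ i ∈ s, f i) with ⟨he, _⟩ | ⟨he, _⟩
      · exact ⟨a, Finset.mem_insert_self _ _, he.symm⟩
      · rw [he] at h ⊢
        obtain ⟨j, hj, hje⟩ := ih h
        exact ⟨j, Finset.mem_insert_of_mem hj, hje⟩

theorem trop_prod_le_prod (hadd : ∀ a b : K, a + b = max a b) {ι : Type*} {s : Finset ι}
    {f g : ι → K} (h : ∀ i ∈ s, f i ≤ g i) : ∏ i ∈ s, f i ≤ ∏ i ∈ s, g i := by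
  classical
  induction s using Finset.induction_on with
  | empty => simp
  | @insert a s hx ih =>
      rw [Finset.prod_insert hx, Finset.prod_insert hx]
      calc f a * ∏ i ∈ s, f i ≤ g a * ∏ i ∈ s, f i :=
            trop_mul_le_mul_right hadd (h _ (Finset.mem_insert_self _ _)) _
        _ ≤ g a * ∏ i ∈ s, g i :=
            trop_mul_le_mul_left hadd (ih fun i hi => h i (Finset.mem_insert_of_mem hi)) _

end TropAux

section TropBal

variable {K : Type*} [Semifield K] [LinearOrder K]

/-- A vector is balanced if it is zero or its maximum is attained at least twice. -/
def TropBal {J : Type*} [Fintype J] (f : J → K) : Prop :=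
  (∀ j, f j = 0) ∨ ∃ j j', j ≠ j' ∧ f j = f j' ∧ ∀ l, f l ≤ f j

theorem trop_singular_iff_bal (hadd : ∀ a b : K, a + b = max a b)
    {m n : Type*} [Fintype m] [Fintype n] [DecidableEq n] (A : Matrix m n K) :
    A.TropSingular ↔ ∃ x : n → K, x ≠ 0 ∧ ∀ i, TropBal (fun j => A i j * x j) := by
  classical
  constructor
  · rintro ⟨A₁, A₂, hA, hdisj, x, hx, hbal⟩
    refine ⟨x, hx, fun i => ?_⟩
    have hv : A₁.mulVec x i = A₂.mulVec x i := congrFun hbal i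
    simp only [Matrix.mulVec, dotProduct] at hv
    have hAij : ∀ j, A i j * x j = A₁ i j * x j + A₂ i j * x j := by
      intro j; rw [hA]; simp [Matrix.add_apply, add_mul]
    have hle : ∀ j, A i j * x j ≤ ∑ l, A₁ i l * x l := by
      intro j
      rw [hAij j, hadd]
      exact max_le (trop_le_sum hadd (f := fun l => A₁ i l * x l) (Finset.mem_univ j))
        ((trop_le_sum hadd (f := fun l => A₂ i l * x l) (Finset.mem_univ j)).trans hv.ge)
    by_cases h0 : ∑ l, A₁ i l * x l = 0
    · exact Or.inl fun j => le_antisymm (h0 ▸ hle j) (trop_zero_le hadd _)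
    · obtain ⟨j₁, _, hj₁⟩ := trop_sum_mem hadd h0
      have h0' : ∑ l, A₂ i l * x l ≠ 0 := by rw [← hv]; exact h0
      obtain ⟨j₂, _, hj₂⟩ := trop_sum_mem hadd h0'
      rw [← hv] at hj₂
      have hne : j₁ ≠ j₂ := by
        rintro rfl
        rcases hdisj i j₁ with h | h
        · rw [h, zero_mul] at hj₁; exact h0 hj₁.symm
        · rw [h, zero_mul] at hj₂; exact h0 hj₂.symm
      have e1 : A i j₁ * x j₁ = ∑ l, A₁ i l * x l := by
        refine le_antisymm (hle j₁) ?_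
        rw [hAij j₁, hadd]; rw [hj₁]; exact le_max_left _ _
      have e2 : A i j₂ * x j₂ = ∑ l, A₁ i l * x l := by
        refine le_antisymm (hle j₂) ?_
        rw [hAij j₂, hadd]; rw [hj₂]; exact le_max_right _ _
      exact Or.inr ⟨j₁, j₂, hne, e1.trans e2.symm, fun l => (hle l).trans e1.ge⟩
  · rintro ⟨x, hx, hbal⟩
    classical
    have hGood : ∀ i, ¬ (∀ j, A i j * x j = 0) →
        ∃ j₀, (∀ l, A i l * x l ≤ A i j₀ * x j₀) ∧
          ∃ j', j' ≠ j₀ ∧ A i j' * x j' = A i j₀ * x j₀ := by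
      intro i hi
      rcases hbal i with h | ⟨j, j', hne, heq, hle⟩
      · exact absurd h hi
      · exact ⟨j, hle, j', hne.symm, heq.symm⟩
    set c : (i : m) → ¬ (∀ j, A i j * x j = 0) → n := fun i hi => (hGood i hi).choose with hc
    refine ⟨fun i j => if hi : ∀ j, A i j * x j = 0 then A i j
        else if j = c i hi then A i j else 0,
      fun i j => if hi : ∀ j, A i j * x j = 0 then 0
        else if j = c i hi then 0 else A i j, ?_, ?_, x, hx, ?_⟩
    · ext i j
      show A i j = (if hi : ∀ j, A i j * x j = 0 then A i j else if j = c i hi then A i j else 0) +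
        (if hi : ∀ j, A i j * x j = 0 then 0 else if j = c i hi then 0 else A i j)
      by_cases hi : ∀ j, A i j * x j = 0
      · simp only [dif_pos hi, add_zero]
      · simp only [dif_neg hi]
        by_cases hj : j = c i hi
        · simp only [if_pos hj, add_zero]
        · simp only [if_neg hj, zero_add]
    · intro i j
      by_cases hi : ∀ j, A i j * x j = 0
      · exact Or.inr (by simp only [dif_pos hi])
      · by_cases hj : j = c i hi
        · exact Or.inr (by simp only [dif_neg hi, if_pos hj])
        · exact Or.inl (by simp only [dif_neg hi, if_neg hj])
    · ext i
      simp only [Matrix.mulVec, dotProduct]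
      by_cases hi : ∀ j, A i j * x j = 0
      · simp only [dif_pos hi]
        rw [Finset.sum_congr rfl fun j (_ : j ∈ Finset.univ) => hi j]
        simp
      · simp only [dif_neg hi]
        obtain ⟨hmax, j', hj'ne, hj'eq⟩ := (hGood i hi).choose_spec
        have hcc : c i hi = (hGood i hi).choose := rfl
        rw [← hcc] at hmax hj'eq
        have lhs : (∑ j, (if j = c i hi then A i j else 0) * x j)
            = A i (c i hi) * x (c i hi) := by
          rw [Finset.sum_eq_single (c i hi)]
          · simp
          · intro b _ hb; simp [hb]
          · intro hb; exact absurd (Finset.mem_univ _) hb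
        rw [lhs]
        refine le_antisymm ?_ ?_ |>.symm
        · refine trop_sum_le hadd fun j _ => ?_
          by_cases hj : j = c i hi
          · simp [hj, trop_zero_le hadd]
          · simpa [hj] using hmax j
        · rw [← hj'eq]
          refine le_trans ?_ (trop_le_sum hadd (Finset.mem_univ j'))
          simp [hj'ne, hcc]

end TropBal

section TropDet

variable {K : Type*} [Semifield K] [LinearOrder K]

theorem trop_detcond_iff (hadd : ∀ a b : K, a + b = max a b) {α : Type*} [Fintype α]
    [DecidableEq α] (w : α → K) :
    (∃ T : Finset α, ∑ σ ∈ T, w σ = ∑ σ ∈ Tᶜ, w σ) ↔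
      (∀ σ, w σ = 0) ∨ ∃ σ τ, σ ≠ τ ∧ w σ = w τ ∧ ∀ ρ, w ρ ≤ w σ := by
  constructor
  · rintro ⟨T, hT⟩
    by_cases h0 : ∑ σ ∈ T, w σ = 0
    · refine Or.inl fun σ => ?_
      by_cases hσ : σ ∈ T
      · exact trop_sum_eq_zero hadd h0 hσ
      · exact trop_sum_eq_zero hadd (hT ▸ h0) (Finset.mem_compl.mpr hσ)
    · obtain ⟨σ, hσT, hσ⟩ := trop_sum_mem hadd h0
      obtain ⟨τ, hτT, hτ⟩ := trop_sum_mem hadd (fun h => h0 (hT.trans h))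
      refine Or.inr ⟨σ, τ, ?_, ?_, ?_⟩
      · rintro rfl; exact (Finset.mem_compl.mp hτT) hσT
      · rw [hσ, hτ, hT]
      · intro ρ
        rw [hσ]
        by_cases hρ : ρ ∈ T
        · exact trop_le_sum hadd hρ
        · exact (trop_le_sum hadd (Finset.mem_compl.mpr hρ)).trans hT.ge
  · rintro (h | ⟨σ, τ, hne, heq, hmax⟩)
    · exact ⟨∅, by rw [Finset.sum_empty, Finset.sum_eq_zero fun σ _ => h σ]⟩
    · refine ⟨{σ}, ?_⟩
      rw [Finset.sum_singleton]
      refine le_antisymm ?_ (trop_sum_le hadd fun ρ _ => hmax ρ)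
      calc w σ = w τ := heq
        _ ≤ ∑ ρ ∈ ({σ} : Finset α)ᶜ, w ρ :=
          trop_le_sum hadd (Finset.mem_compl.mpr (by simp [hne.symm]))

end TropDet

section TropP1

variable {K : Type*} [Semifield K] [LinearOrder K]

theorem trop_bal_to_det (hadd : ∀ a b : K, a + b = max a b) {n : ℕ}
    (A : Matrix (Fin n) (Fin n) K) (x : Fin n → K) (hx : x ≠ 0)
    (hbal : ∀ i, TropBal (fun j => A i j * x j)) :
    (∀ σ : Equiv.Perm (Fin n), ∏ i, A i (σ i) = 0) ∨
      ∃ σ τ : Equiv.Perm (Fin n), σ ≠ τ ∧ (∏ i, A i (σ i)) = (∏ i, A i (τ i)) ∧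
        ∀ ρ : Equiv.Perm (Fin n), (∏ i, A i (ρ i)) ≤ ∏ i, A i (σ i) := by
  classical
  set w : Equiv.Perm (Fin n) → K := fun σ => ∏ i, A i (σ i) with hw
  obtain ⟨σs, hσs⟩ : ∃ σ₀, ∀ ρ, w ρ ≤ w σ₀ := Finite.exists_max w
  by_cases hw0 : w σs = 0
  · exact Or.inl fun σ => le_antisymm (hw0 ▸ hσs σ) (trop_zero_le hadd _)
  refine Or.inr ?_
  have hAσ : ∀ i, A i (σs i) ≠ 0 := by
    intro i
    exact Finset.prod_ne_zero_iff.mp hw0 i (Finset.mem_univ i)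
  have hspec : ∀ i, x (σs i) ≠ 0 → ∃ i', i' ≠ i ∧ x (σs i') ≠ 0 ∧
      A i (σs i) * x (σs i) ≤ A i (σs i') * x (σs i') := by
    intro i hxi
    have hfi : A i (σs i) * x (σs i) ≠ 0 := mul_ne_zero (hAσ i) hxi
    rcases hbal i with h | ⟨j, j', hne, heq, hle⟩
    · exact absurd (h (σs i)) hfi
    · have hfj : A i j * x j ≠ 0 := fun h0 => hfi (le_antisymm (h0 ▸ hle (σs i)) (trop_zero_le hadd _))
      have hfj' : A i j' * x j' ≠ 0 := fun h0 => hfj (heq.trans h0)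
      by_cases hj : j = σs i
      · refine ⟨σs.symm j', ?_, ?_, ?_⟩
        · intro hcon
          apply hne
          rw [hj, ← hcon, Equiv.apply_symm_apply]
        · rw [Equiv.apply_symm_apply]
          exact fun h0 => hfj' (by rw [h0, mul_zero])
        · rw [Equiv.apply_symm_apply]
          exact hj ▸ ((hle (σs i)).trans (le_of_eq heq))
      · refine ⟨σs.symm j, ?_, ?_, ?_⟩
        · intro hcon
          apply hj
          rw [← hcon, Equiv.apply_symm_apply]
        · rw [Equiv.apply_symm_apply]
          exact fun h0 => hfj (by rw [h0, mul_zero])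
        · rw [Equiv.apply_symm_apply]
          exact hle (σs i)
  set h : Fin n → Fin n := fun i => if hxi : x (σs i) ≠ 0 then (hspec i hxi).choose else i
    with hhdef
  have hP : ∀ i, x (σs i) ≠ 0 → h i ≠ i ∧ x (σs (h i)) ≠ 0 ∧
      A i (σs i) * x (σs i) ≤ A i (σs (h i)) * x (σs (h i)) := by
    intro i hxi
    have : h i = (hspec i hxi).choose := by rw [hhdef]; simp [dif_pos hxi]
    rw [this]
    obtain ⟨h1, h2, h3⟩ := (hspec i hxi).choose_spec
    exact ⟨h1, h2, h3⟩
  obtain ⟨j₀, hj₀⟩ : ∃ j, x j ≠ 0 := by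
    by_contra hcon
    push_neg at hcon
    exact hx (funext hcon)
  have hn : 0 < n := Fin.pos j₀
  set i₀ : Fin n := σs.symm j₀ with hi₀
  have hxi₀ : x (σs i₀) ≠ 0 := by rwa [hi₀, Equiv.apply_symm_apply]
  have hiter : ∀ t, x (σs (h^[t] i₀)) ≠ 0 := by
    intro t
    induction t with
    | zero => exact hxi₀
    | succ t ih =>
        rw [Function.iterate_succ_apply']
        exact (hP _ ih).2.1
  -- pigeonhole to find a periodic point
  obtain ⟨a, _, b, _, hab, heq⟩ := Finset.exists_ne_map_eq_of_card_lt_of_maps_to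
    (s := Finset.range (n + 1)) (t := (Finset.univ : Finset (Fin n)))
    (by simp) (fun t _ => Finset.mem_univ (h^[t] i₀))
  wlog hab' : a < b generalizing a b
  · exact this b ‹_› a ‹_› hab.symm heq.symm (by omega)
  set i₁ : Fin n := h^[a] i₀ with hi₁
  have hper0 : h^[b - a] i₁ = i₁ := by
    rw [hi₁, ← Function.iterate_add_apply]
    have : b - a + a = b := by omega
    rw [this, ← heq]
  have hx₁ : ∀ t, x (σs (h^[t] i₁)) ≠ 0 := by
    intro t
    rw [hi₁, ← Function.iterate_add_apply]
    exact hiter _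
  have hPex : ∃ d, 0 < d ∧ h^[d] i₁ = i₁ := ⟨b - a, by omega, hper0⟩
  set k : ℕ := Nat.find hPex with hkdef
  obtain ⟨hkpos, hkper⟩ := Nat.find_spec hPex
  have hk2 : h i₁ ≠ i₁ := (hP i₁ (hx₁ 0)).1
  have dist : ∀ s t : ℕ, 0 < s → s < t → t ≤ k → h^[s] i₁ ≠ h^[t] i₁ := by
    intro s t hs hst htk hcon
    have h2 : h^[(k - t) + s] i₁ = h^[(k - t) + t] i₁ := by
      rw [Function.iterate_add_apply, Function.iterate_add_apply, hcon]
    have h3 : (k - t) + t = k := by omega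
    rw [h3, hkper] at h2
    exact Nat.find_min hPex (m := (k - t) + s) (by omega) ⟨by omega, h2⟩
  set C : Finset (Fin n) := (Finset.range k).image (fun t => h^[t] i₁) with hCdef
  have memC : ∀ {i}, i ∈ C ↔ ∃ t, t < k ∧ h^[t] i₁ = i := by
    intro i
    simp only [hCdef, Finset.mem_image, Finset.mem_range]
  have hi₁C : i₁ ∈ C := memC.mpr ⟨0, hkpos, rfl⟩
  have hCmaps : ∀ i ∈ C, h i ∈ C := by
    intro i hi
    obtain ⟨t, ht, rfl⟩ := memC.mp hi
    rw [← Function.iterate_succ_apply' h t i₁]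
    rcases Nat.lt_or_ge (t + 1) k with h' | h'
    · exact memC.mpr ⟨t + 1, h', rfl⟩
    · have h'' : t.succ = k := by omega
      rw [h'', hkper]
      exact hi₁C
  have hCx : ∀ i ∈ C, x (σs i) ≠ 0 := by
    intro i hi
    obtain ⟨t, _, rfl⟩ := memC.mp hi
    exact hx₁ t
  have injOn : ∀ i ∈ C, ∀ i' ∈ C, h i = h i' → i = i' := by
    intro i hi i' hi' hhe
    obtain ⟨s, hs, rfl⟩ := memC.mp hi
    obtain ⟨t, ht, rfl⟩ := memC.mp hi'
    rcases Nat.lt_trichotomy s t with h' | h' | h'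
    · exfalso
      refine dist (s + 1) (t + 1) (by omega) (by omega) (by omega) ?_
      rw [Function.iterate_succ_apply', Function.iterate_succ_apply', hhe]
    · rw [h']
    · exfalso
      refine dist (t + 1) (s + 1) (by omega) (by omega) (by omega) ?_
      rw [Function.iterate_succ_apply', Function.iterate_succ_apply', hhe]
  have hsurjC : ∀ b' ∈ C, ∃ a', ∃ _ : a' ∈ C, h a' = b' := by
    intro b' hb'
    obtain ⟨t, ht, rfl⟩ := memC.mp hb'
    rcases Nat.eq_zero_or_pos t with rfl | htpos
    · refine ⟨h^[k - 1] i₁, memC.mpr ⟨k - 1, by omega, rfl⟩, ?_⟩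
      rw [← Function.iterate_succ_apply' h (k - 1) i₁]
      have h'' : (k - 1).succ = k := by omega
      rw [h'', hkper]
      rfl
    · refine ⟨h^[t - 1] i₁, memC.mpr ⟨t - 1, by omega, rfl⟩, ?_⟩
      rw [← Function.iterate_succ_apply' h (t - 1) i₁]
      congr 1
      omega
  set g : Fin n → Fin n := fun i => if i ∈ C then σs (h i) else σs i with hgdef
  have ginj : Function.Injective g := by
    intro i i' he
    simp only [hgdef] at he
    by_cases hi : i ∈ C <;> by_cases hi' : i' ∈ C
    · rw [if_pos hi, if_pos hi'] at he
      exact injOn i hi i' hi' (σs.injective he)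
    · rw [if_pos hi, if_neg hi'] at he
      exact absurd (σs.injective he ▸ hCmaps i hi) hi'
    · rw [if_neg hi, if_pos hi'] at he
      exact absurd ((σs.injective he).symm ▸ hCmaps i' hi') hi
    · rw [if_neg hi, if_neg hi'] at he
      exact σs.injective he
  set τ : Equiv.Perm (Fin n) := Equiv.ofBijective g (Finite.injective_iff_bijective.mp ginj)
    with hτdef
  have hτ : ∀ i, τ i = g i := fun _ => rfl
  have hτC : ∀ i ∈ C, τ i = σs (h i) := by
    intro i hi; rw [hτ, hgdef]; exact if_pos hi
  have hτCc : ∀ i, i ∉ C → τ i = σs i := by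
    intro i hi; rw [hτ, hgdef]; exact if_neg hi
  have hτne : σs ≠ τ := by
    intro hcon
    apply hk2
    apply σs.injective
    rw [← hτC i₁ hi₁C, ← hcon]
  -- the exchange inequality
  have step1 : (∏ i ∈ C, (A i (σs i) * x (σs i))) ≤ ∏ i ∈ C, (A i (σs (h i)) * x (σs (h i))) :=
    trop_prod_le_prod hadd fun i hi => (hP i (hCx i hi)).2.2
  have step2 : (∏ i ∈ C, x (σs (h i))) = ∏ i ∈ C, x (σs i) := by
    refine Finset.prod_bij (fun a' (_ : a' ∈ C) => h a') hCmaps injOn hsurjC ?_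
    intro a' _
    rfl
  have hX : (∏ i ∈ C, x (σs i)) ≠ 0 := Finset.prod_ne_zero_iff.mpr hCx
  have step3 : (∏ i ∈ C, A i (σs i)) ≤ ∏ i ∈ C, A i (σs (h i)) := by
    refine trop_le_of_mul_le_mul hadd ?_ hX
    rw [Finset.prod_mul_distrib, Finset.prod_mul_distrib] at step1
    calc (∏ i ∈ C, A i (σs i)) * ∏ i ∈ C, x (σs i)
        ≤ (∏ i ∈ C, A i (σs (h i))) * ∏ i ∈ C, x (σs (h i)) := step1
      _ = (∏ i ∈ C, A i (σs (h i))) * ∏ i ∈ C, x (σs i) := by rw [step2]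
  have hwτ : w σs ≤ w τ := by
    show (∏ i, A i (σs i)) ≤ ∏ i, A i (τ i)
    rw [← Finset.prod_mul_prod_compl C (fun i => A i (σs i)),
        ← Finset.prod_mul_prod_compl C (fun i => A i (τ i))]
    have e1 : (∏ i ∈ C, A i (τ i)) = ∏ i ∈ C, A i (σs (h i)) :=
      Finset.prod_congr rfl fun i hi => by rw [hτC i hi]
    have e2 : (∏ i ∈ Cᶜ, A i (τ i)) = ∏ i ∈ Cᶜ, A i (σs i) :=
      Finset.prod_congr rfl fun i hi => by rw [hτCc i (Finset.mem_compl.mp hi)]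
    rw [e1, e2]
    exact trop_mul_le_mul_right hadd step3 _
  exact ⟨σs, τ, hτne, le_antisymm hwτ (hσs τ), hσs⟩

end TropP1

section TropCore

variable {K : Type*} [Semifield K] [LinearOrder K]

theorem trop_card_ne {α : Type*} [Fintype α] [DecidableEq α] (a : α) :
    Fintype.card {x : α // x ≠ a} + 1 = Fintype.card α := by
  classical
  have h1 : Fintype.card {x : α // x = a} = 1 := Fintype.card_subtype_eq a
  have h2 : Fintype.card {x : α // ¬ x = a} =
      Fintype.card α - Fintype.card {x : α // x = a} :=
    Fintype.card_subtype_compl _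
  have h3 : 0 < Fintype.card α := Fintype.card_pos_iff.mpr ⟨a⟩
  have h4 : Fintype.card {x : α // x ≠ a} = Fintype.card {x : α // ¬ x = a} := rfl
  omega

/-- Sum of the weights of all bijections avoiding column `j` (the tropical minor). -/
noncomputable def tropMinorSum {I J : Type*} [Fintype I] [DecidableEq I] [Fintype J]
    [DecidableEq J] (M : Matrix I J K) (j : J) : K :=
  ∑ e : I ≃ {l : J // l ≠ j}, ∏ i, M i (e i : J)

/-- Extend a bijection avoiding column `j` to a bijection on `Option I`. -/
noncomputable def tropExt {I J : Type*} [Fintype I] [Fintype J] [DecidableEq J]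
    (hc : Fintype.card J = Fintype.card I + 1) (j : J) (e : I ≃ {l : J // l ≠ j}) :
    Option I ≃ J :=
  Equiv.ofBijective (fun r => Option.elim r j (fun i => (e i : J)))
    (by
      rw [Fintype.bijective_iff_injective_and_card]
      constructor
      · intro r r'
        cases r with
        | none => cases r' with
          | none => intro; rfl
          | some i' => intro hcon; exact absurd hcon.symm (e i').2
        | some i => cases r' with
          | none => intro hcon; exact absurd hcon (e i).2
          | some i' => intro hcon
                       exact congrArg some (e.injective (Subtype.val_injective hcon))
      · rw [Fintype.card_option, hc])

@[simp] theorem tropExt_none {I J : Type*} [Fintype I] [Fintype J] [DecidableEq J]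
    (hc : Fintype.card J = Fintype.card I + 1) (j : J) (e : I ≃ {l : J // l ≠ j}) :
    tropExt hc j e none = j := rfl

@[simp] theorem tropExt_some {I J : Type*} [Fintype I] [Fintype J] [DecidableEq J]
    (hc : Fintype.card J = Fintype.card I + 1) (j : J) (e : I ≃ {l : J // l ≠ j}) (i : I) :
    tropExt hc j e (some i) = (e i : J) := rfl

theorem trop_core (hadd : ∀ a b : K, a + b = max a b) {I J : Type*} [Fintype I]
    [DecidableEq I] [Fintype J] [DecidableEq J]
    (hc : Fintype.card J = Fintype.card I + 1) (M : Matrix I J K) (i₀ : I) :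
    TropBal (fun j => M i₀ j * tropMinorSum M j) := by
  classical
  set N : Matrix (Option I) J K := fun r j => Option.elim r (M i₀ j) (fun i => M i j)
    with hN
  set WB : (Option I ≃ J) → K := fun b => ∏ r, N r (b r) with hWB
  have hne : Nonempty (Option I ≃ J) :=
    Fintype.card_eq.mp (by rw [Fintype.card_option, hc])
  obtain ⟨bs, hbs⟩ := Finite.exists_max WB
  have key1 : ∀ (j : J) (e : I ≃ {l : J // l ≠ j}),
      WB (tropExt hc j e) = M i₀ j * ∏ i, M i (e i : J) := by
    intro j e
    rw [hWB]
    simp only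
    rw [Fintype.prod_option]
    rfl
  have key2 : ∀ j, M i₀ j * tropMinorSum M j ≤ WB bs := by
    intro j
    rw [tropMinorSum, Finset.mul_sum]
    refine trop_sum_le hadd fun e _ => ?_
    exact (key1 j e) ▸ hbs (tropExt hc j e)
  have key3 : ∀ b : Option I ≃ J, WB b ≤ M i₀ (b none) * tropMinorSum M (b none) := by
    intro b
    have hcard : Fintype.card I = Fintype.card {l : J // l ≠ b none} := by
      have := trop_card_ne (b none)
      omega
    set eb : I ≃ {l : J // l ≠ b none} :=
      Equiv.ofBijective
        (fun i => (⟨b (some i), fun hcon => Option.some_ne_none i (b.injective hcon)⟩ :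
          {l : J // l ≠ b none}))
        (by
          rw [Fintype.bijective_iff_injective_and_card]
          exact ⟨fun i i' hii => Option.some_injective _
            (b.injective (congrArg Subtype.val hii)), hcard⟩) with heb
    have hWBb : WB b = M i₀ (b none) * ∏ i, M i (eb i : J) := by
      rw [hWB]
      simp only
      rw [Fintype.prod_option]
      rfl
    rw [hWBb]
    refine trop_mul_le_mul_left hadd ?_ _
    exact trop_le_sum hadd
      (f := fun e' : I ≃ {l : J // l ≠ b none} => ∏ i, M i (e' i : J)) (Finset.mem_univ eb)
  by_cases hb0 : WB bs = 0
  · exact Or.inl fun j => le_antisymm ((key2 j).trans hb0.le) (trop_zero_le hadd _)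
  · set sw : Equiv.Perm (Option I) := Equiv.swap none (some i₀) with hsw
    set b' : Option I ≃ J := sw.trans bs with hb'
    have hWB' : WB b' = WB bs := by
      rw [hWB]
      simp only
      have h1 : ∀ r, N (sw r) (bs r) = N r (bs r) := by
        intro r
        cases r with
        | none => rw [hsw]; rw [Equiv.swap_apply_left]; rfl
        | some i =>
            by_cases hi : i = i₀
            · subst hi; rw [hsw, Equiv.swap_apply_right]; rfl
            · rw [hsw, Equiv.swap_apply_of_ne_of_ne (Option.some_ne_none i)
                (fun hcon => hi (Option.some_injective _ hcon))]
      calc (∏ r, N r (bs (sw r)))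
          = ∏ r, N (sw r) (bs (sw (sw r))) := (Equiv.prod_comp sw
            (fun r => N r (bs (sw r)))).symm
        _ = ∏ r, N (sw r) (bs r) := by
            refine Finset.prod_congr rfl fun r _ => ?_
            rw [Equiv.swap_apply_self]
        _ = ∏ r, N r (bs r) := Finset.prod_congr rfl fun r _ => h1 r
    have hb'none : b' none = bs (some i₀) := by
      rw [hb']
      simp only [Equiv.trans_apply]
      rw [hsw, Equiv.swap_apply_left]
    have hj12 : bs none ≠ bs (some i₀) := fun hcon =>
      Option.some_ne_none i₀ (bs.injective hcon).symm
    have e1 : M i₀ (bs none) * tropMinorSum M (bs none) = WB bs :=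
      le_antisymm (key2 _) (key3 bs)
    have e2 : M i₀ (bs (some i₀)) * tropMinorSum M (bs (some i₀)) = WB bs := by
      refine le_antisymm (key2 _) ?_
      have := key3 b'
      rw [hWB', hb'none] at this
      exact this
    exact Or.inr ⟨bs none, bs (some i₀), hj12, e1.trans e2.symm,
      fun l => (key2 l).trans e1.ge⟩

end TropCore

section TropDep

variable {K : Type*} [Semifield K] [LinearOrder K]

noncomputable def tropExt0 {J : Type*} [DecidableEq J] (s : Finset J) (y : {j : J // j ∈ s} → K) :
    J → K := fun j => if h : j ∈ s then y ⟨j, h⟩ else 0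

theorem tropExt0_ne {J : Type*} [DecidableEq J] (s : Finset J) (y : {j : J // j ∈ s} → K)
    (hy : y ≠ 0) : tropExt0 s y ≠ 0 := by
  intro hcon
  apply hy
  funext l
  have := congrFun hcon l.val
  rw [tropExt0] at this
  simp only [l.prop, dif_pos, Subtype.coe_eta] at this
  exact this

theorem tropExt0_mem {J : Type*} [DecidableEq J] (s : Finset J) (y : {j : J // j ∈ s} → K)
    (l : {j : J // j ∈ s}) : tropExt0 s y l.val = y l := by
  rw [tropExt0]
  simp only [l.prop, dif_pos, Subtype.coe_eta]

theorem tropExt0_not_mem {J : Type*} [DecidableEq J] (s : Finset J) (y : {j : J // j ∈ s} → K)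
    {j : J} (hj : j ∉ s) : tropExt0 s y j = 0 := dif_neg hj

theorem trop_bal_extend (hadd : ∀ a b : K, a + b = max a b) {J : Type*} [Fintype J]
    [DecidableEq J] (s : Finset J) (f : J → K) (h0 : ∀ j ∉ s, f j = 0)
    (hb : TropBal (fun l : {j : J // j ∈ s} => f l.val)) : TropBal f := by
  rcases hb with h | ⟨j, j', hne, heq, hle⟩
  · left
    intro j
    by_cases hj : j ∈ s
    · exact h ⟨j, hj⟩
    · exact h0 j hj
  · right
    refine ⟨j.val, j'.val, fun hcon => hne (Subtype.val_injective hcon), heq, ?_⟩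
    intro l
    by_cases hl : l ∈ s
    · exact hle ⟨l, hl⟩
    · rw [h0 l hl]
      exact trop_zero_le hadd _

theorem trop_dep (hadd : ∀ a b : K, a + b = max a b) :
    ∀ (m : ℕ) (I J : Type) [Fintype I] [DecidableEq I] [Fintype J] [DecidableEq J]
      (M : Matrix I J K), Fintype.card I = m → Fintype.card I < Fintype.card J →
      ∃ x : J → K, x ≠ 0 ∧ ∀ i, TropBal (fun j => M i j * x j) := by
  intro m
  induction m using Nat.strong_induction_on with
  | _ m IH =>
  intro I J _ _ _ _ M hm hlt
  classical
  obtain ⟨J', _, hJ'card⟩ := Finset.exists_subset_card_eq (s := (Finset.univ : Finset J)) (n := m + 1)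
    (by rw [Finset.card_univ]; omega)
  set M' : Matrix I {j : J // j ∈ J'} K := fun i l => M i l.val with hM'
  have hc : Fintype.card {j : J // j ∈ J'} = Fintype.card I + 1 := by
    rw [Fintype.card_coe, hJ'card, hm]
  by_cases hx' : ∃ l, tropMinorSum M' l ≠ 0
  · refine ⟨tropExt0 J' (fun l => tropMinorSum M' l), ?_, ?_⟩
    · refine tropExt0_ne J' _ ?_
      obtain ⟨l, hl⟩ := hx'
      intro hcon
      exact hl (congrFun hcon l)
    · intro i
      refine trop_bal_extend hadd J' _ (fun j hj => ?_) ?_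
      · rw [tropExt0_not_mem J' _ hj, mul_zero]
      · have hcore := trop_core hadd hc M' i
        have hfe : (fun l : {j : J // j ∈ J'} =>
            M i l.val * tropExt0 J' (fun l' => tropMinorSum M' l') l.val) =
            (fun l => M' i l * tropMinorSum M' l) := by
          funext l
          rw [tropExt0_mem]
        rw [hfe]
        exact hcore
  · push_neg at hx'
    have hJ'ne : Nonempty {j : J // j ∈ J'} := by
      rw [← Fintype.card_pos_iff, hc]
      omega
    obtain ⟨j₀⟩ := hJ'ne
    set t : {l : {j : J // j ∈ J'} // l ≠ j₀} → Finset I :=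
      fun l => Finset.univ.filter (fun i => M' i l.val ≠ 0) with ht
    have hcard2 : Fintype.card {l : {j : J // j ∈ J'} // l ≠ j₀} = Fintype.card I := by
      have := trop_card_ne j₀
      omega
    have hhall : ¬ ∀ s : Finset {l : {j : J // j ∈ J'} // l ≠ j₀},
        s.card ≤ (s.biUnion t).card := by
      intro hall
      obtain ⟨f, hfinj, hft⟩ := (Finset.all_card_le_biUnion_card_iff_exists_injective t).mp hall
      have hfbij : Function.Bijective f :=
        (Fintype.bijective_iff_injective_and_card f).mpr ⟨hfinj, hcard2⟩
      set e : I ≃ {l : {j : J // j ∈ J'} // l ≠ j₀} := (Equiv.ofBijective f hfbij).symm with he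
      have hterm : (∏ i, M' i ((e i : {l : {j : J // j ∈ J'} // l ≠ j₀}) : {j : J // j ∈ J'})) ≠ 0 := by
        refine Finset.prod_ne_zero_iff.mpr fun i _ => ?_
        have h5 := hft (e i)
        rw [ht] at h5
        simp only [Finset.mem_filter] at h5
        have h6 : f (e i) = i := (Equiv.ofBijective f hfbij).apply_symm_apply i
        rw [h6] at h5
        exact h5.2
      exact hterm (trop_sum_eq_zero hadd (hx' j₀) (Finset.mem_univ e))
    push_neg at hhall
    obtain ⟨s, hs⟩ := hhall
    set I₂ : Finset I := s.biUnion t with hI₂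
    set J₂ : Finset J := s.image (fun l => (l.val.val : J)) with hJ₂
    have hJ₂card : J₂.card = s.card := Finset.card_image_of_injective _
      (Subtype.val_injective.comp Subtype.val_injective)
    have hIJ₂ : Fintype.card {i : I // i ∈ I₂} < Fintype.card {j : J // j ∈ J₂} := by
      rw [Fintype.card_coe, Fintype.card_coe, hJ₂card]
      exact hs
    have hI₂m : I₂.card < m := by
      calc I₂.card < s.card := hs
        _ ≤ Fintype.card {l : {j : J // j ∈ J'} // l ≠ j₀} := by
            rw [← Finset.card_univ]; exact Finset.card_le_univ s
        _ = Fintype.card I := hcard2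
        _ = m := hm
    obtain ⟨x₂, hx₂ne, hx₂bal⟩ := IH I₂.card hI₂m {i : I // i ∈ I₂} {j : J // j ∈ J₂}
      (fun i j => M i.val j.val) (Fintype.card_coe _) hIJ₂
    refine ⟨tropExt0 J₂ x₂, tropExt0_ne J₂ x₂ hx₂ne, ?_⟩
    intro i
    by_cases hi : i ∈ I₂
    · refine trop_bal_extend hadd J₂ _ (fun j hj => ?_) ?_
      · rw [tropExt0_not_mem J₂ _ hj, mul_zero]
      · have hfe : (fun l : {j : J // j ∈ J₂} => M i l.val * tropExt0 J₂ x₂ l.val) =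
            (fun l => M i l.val * x₂ l) := by
          funext l
          rw [tropExt0_mem]
        rw [hfe]
        exact hx₂bal ⟨i, hi⟩
    · left
      intro j
      by_cases hj : j ∈ J₂
      · have hAij : M i j = 0 := by
          rw [hJ₂] at hj
          simp only [Finset.mem_image] at hj
          obtain ⟨l, hls, hlv⟩ := hj
          by_contra hcon
          apply hi
          rw [hI₂]
          refine Finset.mem_biUnion.mpr ⟨l, hls, ?_⟩
          rw [ht]
          simp only [Finset.mem_filter, Finset.mem_univ, true_and]
          rw [hM']
          simp only
          rw [hlv]
          exact hcon
        show M i j * tropExt0 J₂ x₂ j = 0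
        rw [hAij, zero_mul]
      · show M i j * tropExt0 J₂ x₂ j = 0
        rw [tropExt0_not_mem J₂ _ hj, mul_zero]

end TropDep

section TropP2

variable {K : Type*} [Semifield K] [LinearOrder K]

theorem trop_perzero_to_bal (hadd : ∀ a b : K, a + b = max a b) {n : ℕ}
    (A : Matrix (Fin n) (Fin n) K)
    (h0 : ∀ σ : Equiv.Perm (Fin n), ∏ i, A i (σ i) = 0) :
    ∃ x : Fin n → K, x ≠ 0 ∧ ∀ i, TropBal (fun j => A i j * x j) := by
  classical
  set t : Fin n → Finset (Fin n) := fun j => Finset.univ.filter (fun i => A i j ≠ 0) with ht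
  have hhall : ¬ ∀ s : Finset (Fin n), s.card ≤ (s.biUnion t).card := by
    intro hall
    obtain ⟨f, hfinj, hft⟩ := (Finset.all_card_le_biUnion_card_iff_exists_injective t).mp hall
    have hfbij : Function.Bijective f := Finite.injective_iff_bijective.mp hfinj
    set σ : Equiv.Perm (Fin n) := (Equiv.ofBijective f hfbij).symm with hσ
    refine absurd (h0 σ) ?_
    refine Finset.prod_ne_zero_iff.mpr fun i _ => ?_
    have h5 := hft (σ i)
    rw [ht] at h5
    simp only [Finset.mem_filter] at h5
    have h6 : f (σ i) = i := (Equiv.ofBijective f hfbij).apply_symm_apply i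
    rw [h6] at h5
    exact h5.2
  push_neg at hhall
  obtain ⟨s, hs⟩ := hhall
  set I₂ : Finset (Fin n) := s.biUnion t with hI₂
  have hIJ₂ : Fintype.card {i : Fin n // i ∈ I₂} < Fintype.card {j : Fin n // j ∈ s} := by
    rw [Fintype.card_coe, Fintype.card_coe]
    exact hs
  obtain ⟨x₂, hx₂ne, hx₂bal⟩ := trop_dep hadd I₂.card {i : Fin n // i ∈ I₂}
    {j : Fin n // j ∈ s} (fun i j => A i.val j.val) (Fintype.card_coe _) hIJ₂
  refine ⟨tropExt0 s x₂, tropExt0_ne s x₂ hx₂ne, ?_⟩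
  intro i
  by_cases hi : i ∈ I₂
  · refine trop_bal_extend hadd s _ (fun j hj => ?_) ?_
    · rw [tropExt0_not_mem s _ hj, mul_zero]
    · have hfe : (fun l : {j : Fin n // j ∈ s} => A i l.val * tropExt0 s x₂ l.val) =
          (fun l => A i l.val * x₂ l) := by
        funext l
        rw [tropExt0_mem]
      rw [hfe]
      exact hx₂bal ⟨i, hi⟩
  · left
    intro j
    by_cases hj : j ∈ s
    · have hAij : A i j = 0 := by
        by_contra hcon
        apply hi
        rw [hI₂]
        refine Finset.mem_biUnion.mpr ⟨j, hj, ?_⟩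
        rw [ht]
        simp only [Finset.mem_filter, Finset.mem_univ, true_and]
        exact hcon
      show A i j * tropExt0 s x₂ j = 0
      rw [hAij, zero_mul]
    · show A i j * tropExt0 s x₂ j = 0
      rw [tropExt0_not_mem s _ hj, mul_zero]

theorem trop_twice_to_bal (hadd : ∀ a b : K, a + b = max a b) {n : ℕ}
    (A : Matrix (Fin n) (Fin n) K) (σ τ : Equiv.Perm (Fin n)) (hne : σ ≠ τ)
    (heq : (∏ i, A i (σ i)) = ∏ i, A i (τ i))
    (hmax : ∀ ρ : Equiv.Perm (Fin n), (∏ i, A i (ρ i)) ≤ ∏ i, A i (σ i))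
    (hnz : (∏ i, A i (σ i)) ≠ 0) :
    ∃ x : Fin n → K, x ≠ 0 ∧ ∀ i, TropBal (fun j => A i j * x j) := by
  classical
  obtain ⟨i₀, hi₀⟩ : ∃ i₀, σ i₀ ≠ τ i₀ := by
    by_contra h
    push_neg at h
    exact hne (Equiv.ext h)
  set M : Matrix {i : Fin n // i ≠ i₀} (Fin n) K := fun i j => A i.val j with hM
  have hc : Fintype.card (Fin n) = Fintype.card {i : Fin n // i ≠ i₀} + 1 :=
    (trop_card_ne i₀).symm
  set x : Fin n → K := tropMinorSum M with hx
  set oio : Option {i : Fin n // i ≠ i₀} ≃ Fin n :=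
    tropExt hc i₀ (Equiv.refl {i : Fin n // i ≠ i₀}) with hoio
  have hoio_none : oio none = i₀ := rfl
  have hoio_some : ∀ i : {i : Fin n // i ≠ i₀}, oio (some i) = i.val := fun _ => rfl
  have key_reindex : ∀ ρ : Equiv.Perm (Fin n),
      (∏ l, A l (ρ l)) = A i₀ (ρ i₀) * ∏ i : {i : Fin n // i ≠ i₀}, A i.val (ρ i.val) := by
    intro ρ
    rw [← Equiv.prod_comp oio (fun l => A l (ρ l)), Fintype.prod_option]
    rfl
  have key1 : ∀ j, A i₀ j * x j ≤ ∏ l, A l (σ l) := by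
    intro j
    rw [hx, tropMinorSum, Finset.mul_sum]
    refine trop_sum_le hadd fun e _ => ?_
    set ρ : Equiv.Perm (Fin n) := oio.symm.trans (tropExt hc j e) with hρ
    have h7 : oio.symm i₀ = none := by
      rw [Equiv.symm_apply_eq]
      exact hoio_none.symm
    have h8 : ∀ i : {i : Fin n // i ≠ i₀}, oio.symm i.val = some i := by
      intro i
      rw [Equiv.symm_apply_eq]
      exact (hoio_some i).symm
    have hρi₀ : ρ i₀ = j := by
      rw [hρ]
      simp only [Equiv.trans_apply]
      rw [h7]
      rfl
    have hρi : ∀ i : {i : Fin n // i ≠ i₀}, ρ i.val = (e i : Fin n) := by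
      intro i
      rw [hρ]
      simp only [Equiv.trans_apply]
      rw [h8 i]
      rfl
    have : A i₀ j * ∏ i : {i : Fin n // i ≠ i₀}, M i (e i : Fin n) = ∏ l, A l (ρ l) := by
      rw [key_reindex ρ, hρi₀]
      congr 1
      exact Finset.prod_congr rfl fun i _ => by rw [hρi i]
    rw [this]
    exact hmax ρ
  have keyge : ∀ ρ : Equiv.Perm (Fin n),
      (∏ l, A l (ρ l)) ≤ A i₀ (ρ i₀) * x (ρ i₀) := by
    intro ρ
    have hcard : Fintype.card {i : Fin n // i ≠ i₀} =
        Fintype.card {l : Fin n // l ≠ ρ i₀} := by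
      have h1 := trop_card_ne i₀
      have h2 := trop_card_ne (ρ i₀)
      omega
    set eρ : {i : Fin n // i ≠ i₀} ≃ {l : Fin n // l ≠ ρ i₀} :=
      Equiv.ofBijective
        (fun i => (⟨ρ i.val, fun hcon => i.prop (ρ.injective hcon)⟩ :
          {l : Fin n // l ≠ ρ i₀}))
        (by
          rw [Fintype.bijective_iff_injective_and_card]
          exact ⟨fun i i' hii => Subtype.val_injective
            (ρ.injective (congrArg Subtype.val hii)), hcard⟩) with heρ
    have hterm : (∏ i : {i : Fin n // i ≠ i₀}, M i (eρ i : Fin n)) =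
        ∏ i : {i : Fin n // i ≠ i₀}, A i.val (ρ i.val) := rfl
    rw [key_reindex ρ]
    refine trop_mul_le_mul_left hadd ?_ _
    rw [← hterm, hx]
    exact trop_le_sum hadd
      (f := fun e' : {i : Fin n // i ≠ i₀} ≃ {l : Fin n // l ≠ ρ i₀} =>
        ∏ i, M i (e' i : Fin n)) (Finset.mem_univ eρ)
  have e1 : A i₀ (σ i₀) * x (σ i₀) = ∏ l, A l (σ l) :=
    le_antisymm (key1 _) (keyge σ)
  have e2 : A i₀ (τ i₀) * x (τ i₀) = ∏ l, A l (σ l) := by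
    refine le_antisymm (key1 _) ?_
    calc (∏ l, A l (σ l)) = ∏ l, A l (τ l) := heq
      _ ≤ A i₀ (τ i₀) * x (τ i₀) := keyge τ
  have hxne : x ≠ 0 := by
    intro hcon
    apply hnz
    rw [hcon] at e1
    simp only [Pi.zero_apply, mul_zero] at e1
    exact e1.symm
  refine ⟨x, hxne, fun i => ?_⟩
  by_cases hii : i = i₀
  · subst hii
    exact Or.inr ⟨σ i, τ i, hi₀, e1.trans e2.symm, fun l => (key1 l).trans e1.ge⟩
  · exact trop_core hadd hc M ⟨i, hii⟩

end TropP2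

theorem singular_iff_zero_of_det {K : Type*} [Semifield K] [LinearOrder K]
    (hadd : ∀ a b : K, a + b = max a b) {n : ℕ} (A : Matrix (Fin n) (Fin n) K) :
    A.TropSingular ↔
      ∃ T : Finset (Equiv.Perm (Fin n)),
        ∑ σ ∈ T, ∏ i, A i (σ i) = ∑ σ ∈ Tᶜ, ∏ i, A i (σ i) := by
  classical
  rw [trop_singular_iff_bal hadd A,
    trop_detcond_iff hadd (fun σ : Equiv.Perm (Fin n) => ∏ i, A i (σ i))]
  constructor
  · rintro ⟨x, hx, hbal⟩
    exact trop_bal_to_det hadd A x hx hbal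
  · rintro (h0 | ⟨σ, τ, hne, heq, hmax⟩)
    · exact trop_perzero_to_bal hadd A h0
    · by_cases hnz : (∏ i, A i (σ i)) = 0
      · refine trop_perzero_to_bal hadd A fun ρ => ?_
        exact le_antisymm (hnz ▸ hmax ρ) (trop_zero_le hadd _)
      · exact trop_twice_to_bal hadd A σ τ hne heq hmax hnz
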